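/- arXiv:2409.15597 — 2 statements merged into one kernel-verified Lean document; each statement's English description precedes it below -/
import Mathlib

section
/- Fix σ > 0. For every sequence of parameter pairs (μ_m, 𝒯_m) with μ_m → ∞, 𝒯_m → ∞ and √(log 𝒯_m)/μ_m → 0: in the change-point model with change after time τ (X_1,…,X_τ i.i.d. N(0,1), X_{τ+1},…,X_{𝒯_m} i.i.d. N(μ_m, σ²), all independent) and CUSUM drift parameter μ_m, the supremum over integers 1 ≤ τ ≤ t ≤ 𝒯_m of P(Y_t^LR ≠ max_{τ≤k≤t} V_{t,k}) tends to 0 as m → ∞. -/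
open MeasureTheory ProbabilityTheory Filter Real

noncomputable section

/-- Partial sums of a path: `pS X 0 = 0`, `pS X t = X 1 + ⋯ + X t`. -/
def pS (X : ℕ → ℝ) (t : ℕ) : ℝ := ∑ i ∈ Finset.Icc 1 t, X i

/-- CUSUM quantity `V_{t,k}` with drift parameter μ. -/
def cusumV (μ : ℝ) (X : ℕ → ℝ) (t k : ℕ) : ℝ :=
  (pS X t - pS X k - μ / 2 * ((t : ℝ) - (k : ℝ))) * μ

/-- CUSUM statistic `Y_t^LR = max_{0 ≤ k ≤ t} V_{t,k}`. -/
def Ylr (μ : ℝ) (X : ℕ → ℝ) (t : ℕ) : ℝ := ⨆ k : Fin (t + 1), cusumV μ X t (k : ℕ)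

open scoped ENNReal NNReal

lemma pS_diff (X : ℕ → ℝ) {k τ : ℕ} (h : k ≤ τ) :
    pS X τ - pS X k = ∑ i ∈ Finset.Ioc k τ, X i := by
  have h0 : ∀ n : ℕ, pS X n = ∑ i ∈ Finset.Ioc 0 n, X i := by
    intro n; unfold pS; congr 1
  rw [h0, h0, sub_eq_iff_eq_add, ← Finset.sum_Ioc_consecutive _ (Nat.zero_le k) h]
  ring

lemma sup_eq (μ : ℝ) (Z : ℕ → ℝ) (t τ : ℕ) (hτt : τ ≤ t)
    (h : ∀ k, k < τ → cusumV μ Z t k ≤ cusumV μ Z t τ) :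
    Ylr μ Z t = ⨆ k : (Finset.Icc τ t : Finset ℕ), cusumV μ Z t (k : ℕ) := by
  have hmem : τ ∈ Finset.Icc τ t := Finset.mem_Icc.mpr ⟨le_refl τ, hτt⟩
  have ne2 : Nonempty {x // x ∈ Finset.Icc τ t} := ⟨⟨τ, hmem⟩⟩
  have bd1 : BddAbove (Set.range fun k : Fin (t+1) => cusumV μ Z t (k : ℕ)) :=
    Set.Finite.bddAbove (Set.finite_range _)
  have bd2 : BddAbove (Set.range fun k : {x // x ∈ Finset.Icc τ t} => cusumV μ Z t (k : ℕ)) :=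
    Set.Finite.bddAbove (Set.finite_range _)
  apply le_antisymm
  · apply ciSup_le
    intro k
    by_cases hk : τ ≤ (k : ℕ)
    · exact le_ciSup bd2 (⟨(k : ℕ), Finset.mem_Icc.mpr ⟨hk, Nat.lt_succ_iff.mp k.isLt⟩⟩ :
        {x // x ∈ Finset.Icc τ t})
    · exact (h k (not_le.mp hk)).trans (le_ciSup bd2 (⟨τ, hmem⟩ : {x // x ∈ Finset.Icc τ t}))
  · apply ciSup_le
    intro k
    have hkt : (k : ℕ) < t + 1 := Nat.lt_succ_of_le (Finset.mem_Icc.mp k.2).2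
    exact le_ciSup bd1 (⟨(k : ℕ), hkt⟩ : Fin (t + 1))

lemma pdf_mul_exp (t x : ℝ) :
    gaussianPDFReal 0 1 x * rexp (t * x) = rexp (t ^ 2 / 2) * gaussianPDFReal t 1 x := by
  simp only [gaussianPDFReal, NNReal.coe_one, mul_one, sub_zero]
  rw [mul_assoc, mul_comm (rexp (t^2/2)), mul_assoc, ← Real.exp_add, ← Real.exp_add]
  ring_nf

lemma gr_eq : gaussianReal 0 1 =
    (volume : Measure ℝ).withDensity (fun x => ((gaussianPDFReal 0 1 x).toNNReal : ℝ≥0∞)) := by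
  rw [gaussianReal_of_var_ne_zero 0 one_ne_zero]
  rfl

lemma integral_exp_gaussianReal (t : ℝ) :
    ∫ x, rexp (t * x) ∂(gaussianReal 0 1) = rexp (t ^ 2 / 2) := by
  rw [gr_eq, integral_withDensity_eq_integral_smul
    ((measurable_gaussianPDFReal 0 1).real_toNNReal)]
  have : ∀ x : ℝ, (gaussianPDFReal 0 1 x).toNNReal • rexp (t * x)
      = rexp (t ^ 2 / 2) * gaussianPDFReal t 1 x := by
    intro x
    rw [NNReal.smul_def, smul_eq_mul, Real.coe_toNNReal _ (gaussianPDFReal_nonneg 0 1 x),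
      pdf_mul_exp]
  simp_rw [this]
  rw [integral_const_mul, integral_gaussianPDFReal_eq_one t one_ne_zero, mul_one]

lemma integrable_exp_gaussianReal (t : ℝ) :
    Integrable (fun x => rexp (t * x)) (gaussianReal 0 1) := by
  rw [gr_eq, integrable_withDensity_iff_integrable_smul
    ((measurable_gaussianPDFReal 0 1).real_toNNReal)]
  have : ∀ x : ℝ, (gaussianPDFReal 0 1 x).toNNReal • rexp (t * x)
      = rexp (t ^ 2 / 2) * gaussianPDFReal t 1 x := by
    intro x
    rw [NNReal.smul_def, smul_eq_mul, Real.coe_toNNReal _ (gaussianPDFReal_nonneg 0 1 x),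
      pdf_mul_exp]
  simp_rw [this]
  exact (integrable_gaussianPDFReal t 1).const_mul _

variable {Ω : Type} [MeasurableSpace Ω] {P : Measure Ω} [IsProbabilityMeasure P]

lemma integrable_exp_of_gauss {X : Ω → ℝ} (hX : Measurable X)
    (h : Measure.map X P = gaussianReal 0 1) (t : ℝ) :
    Integrable (fun ω => rexp (t * X ω)) P := by
  have : Integrable (fun x => rexp (t * x)) (Measure.map X P) := by
    rw [h]; exact integrable_exp_gaussianReal t
  exact (integrable_map_measure (Measurable.aestronglyMeasurable (by fun_prop))
    hX.aemeasurable).mp this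

lemma mgf_of_gauss {X : Ω → ℝ} (hX : Measurable X)
    (h : Measure.map X P = gaussianReal 0 1) (t : ℝ) :
    mgf X P t = rexp (t ^ 2 / 2) := by
  have h2 : ∫ x, rexp (t * x) ∂(Measure.map X P) = ∫ ω, rexp (t * X ω) ∂P :=
    integral_map hX.aemeasurable (Measurable.aestronglyMeasurable (by fun_prop))
  rw [mgf, ← h2, h, integral_exp_gaussianReal]

/-- The key Chernoff + union bound. -/
lemma key_bound (μ : ℝ) (hμpos : 0 < μ) (T τ t : ℕ) (hτ1 : 1 ≤ τ) (hτt : τ ≤ t) (htT : t ≤ T)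
    (X : ℕ → Ω → ℝ) (hmeas : ∀ i, Measurable (X i))
    (hind : iIndepFun (fun i : ↥(Set.Icc 1 T) => X (i : ℕ)) P)
    (hgauss : ∀ i, 1 ≤ i → i ≤ τ → Measure.map (X i) P = gaussianReal 0 1) :
    (P {ω | Ylr μ (fun i => X i ω) t ≠
        ⨆ k : (Finset.Icc τ t : Finset ℕ), cusumV μ (fun i => X i ω) t (k : ℕ)}).toReal
      ≤ (T : ℝ) * rexp (-(μ ^ 2) / 8) := by
  classical
  set B : ℕ → Set Ω := fun k =>
    {ω | μ / 2 * ((τ : ℝ) - (k : ℝ)) ≤ ∑ i ∈ Finset.Ioc k τ, X i ω} with hB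
  -- deterministic inclusion
  have hsub : {ω | Ylr μ (fun i => X i ω) t ≠
      ⨆ k : (Finset.Icc τ t : Finset ℕ), cusumV μ (fun i => X i ω) t (k : ℕ)}
      ⊆ ⋃ k ∈ Finset.range τ, B k := by
    intro ω hω
    simp only [Set.mem_setOf_eq] at hω
    by_contra hcon
    simp only [Set.mem_iUnion, not_exists, Finset.mem_range] at hcon
    apply hω
    apply sup_eq μ _ t τ hτt
    intro k hk
    have h1 : ¬ (μ / 2 * ((τ : ℝ) - (k : ℝ)) ≤ ∑ i ∈ Finset.Ioc k τ, X i ω) := hcon k hk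
    push_neg at h1
    have h2 : pS (fun i => X i ω) τ - pS (fun i => X i ω) k = ∑ i ∈ Finset.Ioc k τ, X i ω :=
      pS_diff _ hk.le
    unfold cusumV
    nlinarith [h1, h2]
  -- probability bound for each B k
  have hBk : ∀ k, k < τ → (P (B k)).toReal ≤ rexp (-(μ ^ 2) / 8) := by
    intro k hk
    set ι := ↥(Set.Icc 1 T)
    set Y : ι → Ω → ℝ := fun i => X (i : ℕ) with hY
    set s' : Finset ι := (Finset.Ioc k τ).subtype (· ∈ Set.Icc 1 T) with hs'
    have hall : ∀ i ∈ Finset.Ioc k τ, i ∈ Set.Icc 1 T := by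
      intro i hi
      rw [Finset.mem_Ioc] at hi
      exact Set.mem_Icc.mpr ⟨by omega, by omega⟩
    have hsum : (∑ i ∈ s', Y i) = fun ω => ∑ i ∈ Finset.Ioc k τ, X i ω := by
      funext ω
      rw [Finset.sum_apply]
      have h3 := Finset.sum_subtype_eq_sum_filter (s := Finset.Ioc k τ)
        (fun i => X i ω) (p := (· ∈ Set.Icc 1 T))
      exact h3.trans (by rw [Finset.filter_true_of_mem hall])
    have hgauss' : ∀ i : ι, (i : ℕ) ∈ Finset.Ioc k τ →
        Measure.map (Y i) P = gaussianReal 0 1 := by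
      intro i hi
      rw [Finset.mem_Ioc] at hi
      exact hgauss _ (Nat.one_le_iff_ne_zero.mpr (Nat.pos_of_ne_zero (by omega)).ne') hi.2
    have hmeas' : ∀ i : ι, Measurable (Y i) := fun i => hmeas _
    have hms' : ∀ i : ι, i ∈ s' → (i : ℕ) ∈ Finset.Ioc k τ := by
      intro i hi
      rw [hs', Finset.mem_subtype] at hi
      exact hi
    have hint : ∀ i : ι, i ∈ s' → Integrable (fun ω => rexp (μ / 2 * Y i ω)) P := by
      intro i hi
      exact integrable_exp_of_gauss (hmeas' i) (hgauss' i (hms' i hi)) _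
    have hintS : Integrable (fun ω => rexp (μ / 2 * (∑ i ∈ s', Y i) ω)) P :=
      hind.integrable_exp_mul_sum hmeas' hint
    have hcher := measure_ge_le_exp_mul_mgf (μ := P) (X := ∑ i ∈ s', Y i)
      (μ / 2 * ((τ : ℝ) - (k : ℝ))) (by positivity) hintS
    have hcard : s'.card = τ - k := by
      rw [hs', Finset.card_subtype, Finset.filter_true_of_mem hall, Nat.card_Ioc]
    have hmgf : mgf (∑ i ∈ s', Y i) P (μ / 2) = rexp ((μ / 2) ^ 2 / 2) ^ (τ - k) := by
      rw [hind.mgf_sum hmeas' s']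
      rw [Finset.prod_congr rfl (fun i hi => mgf_of_gauss (hmeas' i) (hgauss' i (hms' i hi)) _)]
      rw [Finset.prod_const, hcard]
    have hBeq : B k = {ω | μ / 2 * ((τ : ℝ) - (k : ℝ)) ≤ (∑ i ∈ s', Y i) ω} := by
      rw [hB, hsum]
    rw [hBeq]
    refine hcher.trans ?_
    rw [hmgf, ← Real.exp_nat_mul, ← Real.exp_add]
    apply Real.exp_le_exp.mpr
    have hc : ((τ - k : ℕ) : ℝ) = (τ : ℝ) - (k : ℝ) := by
      push_cast [Nat.cast_sub hk.le]; ring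
    rw [hc]
    have h1 : (1 : ℝ) ≤ (τ : ℝ) - (k : ℝ) := by
      have : (k : ℝ) + 1 ≤ (τ : ℝ) := by exact_mod_cast hk
      linarith
    nlinarith [sq_nonneg μ, mul_pos hμpos hμpos]
  -- union bound
  have hP : P {ω | Ylr μ (fun i => X i ω) t ≠
      ⨆ k : (Finset.Icc τ t : Finset ℕ), cusumV μ (fun i => X i ω) t (k : ℕ)}
      ≤ ∑ k ∈ Finset.range τ, P (B k) :=
    (measure_mono hsub).trans (measure_biUnion_finset_le _ _)
  have hsumne : (∑ k ∈ Finset.range τ, P (B k)) ≠ ⊤ :=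
    (ENNReal.sum_lt_top.mpr fun k _ => measure_lt_top P _).ne
  refine (ENNReal.toReal_mono hsumne hP).trans ?_
  rw [ENNReal.toReal_sum (fun k _ => (measure_lt_top P _).ne)]
  calc ∑ k ∈ Finset.range τ, (P (B k)).toReal
      ≤ ∑ _k ∈ Finset.range τ, rexp (-(μ ^ 2) / 8) := by
        apply Finset.sum_le_sum
        intro k hk
        exact hBk k (Finset.mem_range.mp hk)
    _ = (τ : ℝ) * rexp (-(μ ^ 2) / 8) := by
        rw [Finset.sum_const, Finset.card_range, nsmul_eq_mul]
    _ ≤ (T : ℝ) * rexp (-(μ ^ 2) / 8) := by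
        have : (τ : ℝ) ≤ (T : ℝ) := by exact_mod_cast hτt.trans htT
        nlinarith [Real.exp_pos (-(μ ^ 2) / 8)]

/-- with μ_m → ∞, 𝒯_m → ∞, √(log 𝒯_m)/μ_m → 0, P(Y_t^LR ≠ max_{τ≤k≤t} V_{t,k}) tends to 0 uniformly in 1 ≤ τ ≤ t ≤ 𝒯_m. -/
theorem statement8 (σ : ℝ) (hσ : 0 < σ) (μs : ℕ → ℝ) (Ts : ℕ → ℕ)
    (hμ : Tendsto μs atTop atTop) (hT : Tendsto Ts atTop atTop)
    (hrate : Tendsto (fun m => Real.sqrt (Real.log (Ts m : ℝ)) / μs m) atTop (nhds 0)) :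
    ∀ ε : ℝ, 0 < ε → ∃ M : ℕ, ∀ m : ℕ, M ≤ m →
      ∀ τ t : ℕ, 1 ≤ τ → τ ≤ t → t ≤ Ts m →
      ∀ (Ω : Type) [MeasurableSpace Ω] (P : Measure Ω) [IsProbabilityMeasure P]
        (X : ℕ → Ω → ℝ), (∀ i, Measurable (X i)) →
      iIndepFun (fun i : ↥(Set.Icc 1 (Ts m)) => X (i : ℕ)) P →
      (∀ i, 1 ≤ i → i ≤ τ → Measure.map (X i) P = gaussianReal 0 1) →
      (∀ i, τ < i → i ≤ Ts m → Measure.map (X i) P = gaussianReal (μs m) ((σ ^ 2).toNNReal)) →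
      (P {ω | Ylr (μs m) (fun i => X i ω) t ≠ ⨆ k : (Finset.Icc τ t : Finset ℕ), cusumV (μs m) (fun i => X i ω) t (k : ℕ)}).toReal ≤ ε := by
  intro ε hε
  have h1 : ∀ᶠ m in atTop, dist (Real.sqrt (Real.log (Ts m : ℝ)) / μs m) 0 < 1/4 :=
    (Metric.tendsto_nhds.mp hrate) (1/4) (by norm_num)
  have h2 := hμ.eventually_ge_atTop (4 * Real.sqrt (max 0 (-Real.log ε)) + 1)
  have h3 := hT.eventually_ge_atTop 1
  obtain ⟨M, hM⟩ := eventually_atTop.mp ((h1.and h2).and h3)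
  refine ⟨M, ?_⟩
  intro m hm τ t hτ1 hτt htT Ω _ P _ X hmeas hind hg1 _hg2
  obtain ⟨⟨hr, hA⟩, hT1⟩ := hM m hm
  have hsA : (0:ℝ) ≤ 4 * Real.sqrt (max 0 (-Real.log ε)) := by positivity
  have hA1 : (1:ℝ) ≤ μs m := by linarith
  have hμpos : (0:ℝ) < μs m := lt_of_lt_of_le one_pos hA1
  have key := key_bound (P := P) (μs m) hμpos (Ts m) τ t hτ1 hτt htT X hmeas hind hg1
  refine key.trans ?_
  have hTs1 : (1:ℝ) ≤ (Ts m : ℝ) := by exact_mod_cast hT1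
  have hL : 0 ≤ Real.log (Ts m : ℝ) := Real.log_nonneg hTs1
  have hr' : Real.sqrt (Real.log (Ts m : ℝ)) / μs m < 1/4 := by
    rw [Real.dist_eq, sub_zero] at hr
    exact lt_of_abs_lt hr
  have hsq : Real.sqrt (Real.log (Ts m : ℝ)) < μs m / 4 := by
    rw [div_lt_iff₀ hμpos] at hr'
    linarith
  have hlog : Real.log (Ts m : ℝ) ≤ (μs m)^2/16 := by
    nlinarith [Real.sq_sqrt hL, Real.sqrt_nonneg (Real.log (Ts m : ℝ))]
  have hε2 : -Real.log ε ≤ (μs m)^2/16 := by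
    have h4 : 4 * Real.sqrt (max 0 (-Real.log ε)) ≤ μs m := by linarith
    have hmax : max 0 (-Real.log ε) ≤ (μs m)^2/16 := by
      nlinarith [Real.sq_sqrt (le_max_left 0 (-Real.log ε)),
        Real.sqrt_nonneg (max 0 (-Real.log ε))]
    exact le_trans (le_max_right _ _) hmax
  calc (Ts m : ℝ) * rexp (-((μs m)^2) / 8)
      = rexp (Real.log (Ts m : ℝ) + (-((μs m)^2) / 8)) := by
        rw [Real.exp_add, Real.exp_log (by linarith)]
    _ ≤ rexp (Real.log ε) := by
        apply Real.exp_le_exp.mpr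
        linarith
    _ = ε := Real.exp_log hε


end
end

section
/- Fix σ > 0. For every sequence of parameter pairs (μ_m, 𝒯_m) with μ_m → ∞, 𝒯_m → ∞ and √(log 𝒯_m)/μ_m → 0: in the change-point model with change after time τ (X_1,…,X_τ i.i.d. N(0,1), X_{τ+1},…,X_{𝒯_m} i.i.d. N(μ_m, σ²), all independent), the supremum over integers 1 ≤ τ < t ≤ 𝒯_m of P(Y_t^GLR ≠ max_{τ≤k<t} W_{t,k}) tends to 0 as m → ∞. -/
open MeasureTheory ProbabilityTheory Filter Real

noncomputable section

/-- GLR quantity `W_{t,k} = |S_t − S_k|/√(t−k)`. -/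
def glrW (X : ℕ → ℝ) (t k : ℕ) : ℝ := |pS X t - pS X k| / Real.sqrt ((t : ℝ) - (k : ℝ))

/-- GLR statistic `Y_t^GLR = max_{0 ≤ k < t} W_{t,k}`. -/
def Yglr (X : ℕ → ℝ) (t : ℕ) : ℝ := ⨆ k : Fin t, glrW X t (k : ℕ)

open scoped NNReal ENNReal

section Aux11
variable {Ω : Type} [MeasurableSpace Ω]


lemma exp_mul_gaussianPDFReal (m : ℝ) {v : ℝ≥0} (hv : v ≠ 0) (s x : ℝ) :
    Real.exp (s * x) * gaussianPDFReal m v x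
      = Real.exp (m * s + v * s^2 / 2) * gaussianPDFReal (m + v * s) v x := by
  have hv' : (v : ℝ) ≠ 0 := by exact_mod_cast hv
  simp only [gaussianPDFReal]
  rw [mul_left_comm, mul_left_comm (Real.exp _), ← Real.exp_add, ← Real.exp_add]
  congr 1
  congr 1
  field_simp
  ring

lemma integrable_exp_mul_gaussianReal (m : ℝ) (v : ℝ≥0) (s : ℝ) :
    Integrable (fun x => Real.exp (s * x)) (gaussianReal m v) := by
  by_cases hv : v = 0
  · rw [hv, gaussianReal_zero_var]
    refine ⟨(measurable_const.mul measurable_id).exp.aestronglyMeasurable, ?_⟩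
    have hmeas : Measurable fun a : ℝ => ‖Real.exp (s * a)‖ₑ := by
      exact ((measurable_id.const_mul s).exp.enorm)
    rw [HasFiniteIntegral, lintegral_dirac' _ hmeas]
    exact enorm_lt_top
  · rw [gaussianReal_of_var_ne_zero _ hv]
    have h : (gaussianPDF m v) = fun x => ((fun y => (gaussianPDFReal m v y).toNNReal) x : ℝ≥0∞) := rfl
    rw [h, integrable_withDensity_iff_integrable_smul ((measurable_gaussianPDFReal m v).real_toNNReal)]
    refine (Integrable.congr ((integrable_gaussianPDFReal (m + v*s) v).const_mul
      (Real.exp (m * s + v * s^2 / 2))) ?_)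
    filter_upwards with x
    rw [NNReal.smul_def, smul_eq_mul, Real.coe_toNNReal _ (gaussianPDFReal_nonneg m v x),
      mul_comm ((gaussianPDFReal m v x)), exp_mul_gaussianPDFReal m hv]

lemma integral_exp_mul_gaussianReal (m : ℝ) (v : ℝ≥0) (s : ℝ) :
    ∫ x, Real.exp (s * x) ∂(gaussianReal m v) = Real.exp (m * s + v * s^2 / 2) := by
  by_cases hv : v = 0
  · rw [hv, gaussianReal_zero_var, integral_dirac]
    norm_num [mul_comm]
  · rw [gaussianReal_of_var_ne_zero _ hv]
    have h : (gaussianPDF m v) = fun x => ((fun y => (gaussianPDFReal m v y).toNNReal) x : ℝ≥0∞) := rfl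
    rw [h, integral_withDensity_eq_integral_smul ((measurable_gaussianPDFReal m v).real_toNNReal)]
    have : ∀ x, (gaussianPDFReal m v x).toNNReal • Real.exp (s * x)
        = Real.exp (m * s + v * s^2 / 2) * gaussianPDFReal (m + v * s) v x := by
      intro x
      rw [NNReal.smul_def, smul_eq_mul, Real.coe_toNNReal _ (gaussianPDFReal_nonneg m v x),
        mul_comm ((gaussianPDFReal m v x)), exp_mul_gaussianPDFReal m hv]
    simp_rw [this]
    rw [integral_const_mul, integral_gaussianPDFReal_eq_one _ hv, mul_one]

lemma mgf_of_map_gaussianReal {Ω : Type*} [MeasurableSpace Ω] {P : Measure Ω} {X : Ω → ℝ}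
    (hX : Measurable X) {m : ℝ} {v : ℝ≥0} (hmap : Measure.map X P = gaussianReal m v) (s : ℝ) :
    Integrable (fun ω => Real.exp (s * X ω)) P ∧ mgf X P s = Real.exp (m * s + v * s^2 / 2) := by
  have hg : AEStronglyMeasurable (fun x => Real.exp (s * x)) (Measure.map X P) :=
    (measurable_const.mul measurable_id).exp.aestronglyMeasurable
  constructor
  · have := (integrable_map_measure hg hX.aemeasurable).mp
      (hmap ▸ integrable_exp_mul_gaussianReal m v s)
    exact this
  · rw [mgf, ← integral_map hX.aemeasurable hg, hmap, integral_exp_mul_gaussianReal]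


variable {Ω : Type} [MeasurableSpace Ω]

lemma block_sum_eq (T : ℕ) (X : ℕ → Ω → ℝ) (a b : ℕ) (hb : b ≤ T)
    (e : {i // i ∈ Finset.Ioc a b} ↪ ↥(Set.Icc 1 T))
    (he : ∀ i, ((e i : ↥(Set.Icc 1 T)) : ℕ) = (i : ℕ)) (ω : Ω) :
    (∑ i ∈ (Finset.Ioc a b).attach.map e, (fun j : ↥(Set.Icc 1 T) => X (j : ℕ)) i) ω
      = ∑ i ∈ Finset.Ioc a b, X i ω := by
  rw [Finset.sum_apply]
  rw [Finset.sum_map]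
  simp only [he]
  exact Finset.sum_attach (Finset.Ioc a b) (fun i => X i ω)

lemma block_mgf (P : Measure Ω) [IsProbabilityMeasure P] (T : ℕ)
    (X : ℕ → Ω → ℝ) (hXm : ∀ i, Measurable (X i))
    (hind : iIndepFun (fun i : ↥(Set.Icc 1 T) => X (i : ℕ)) P)
    (a b : ℕ) (hab : a ≤ b) (hb : b ≤ T) (s : ℝ) (m : ℝ) (v : ℝ≥0)
    (hlaw : ∀ i ∈ Finset.Ioc a b, Measure.map (X i) P = gaussianReal m v) :
    Integrable (fun ω => Real.exp (s * ∑ i ∈ Finset.Ioc a b, X i ω)) P ∧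
    mgf (fun ω => ∑ i ∈ Finset.Ioc a b, X i ω) P s
      = Real.exp (((b : ℝ) - a) * (m * s + v * s^2 / 2)) := by
  classical
  have hmem : ∀ i : {i // i ∈ Finset.Ioc a b}, (i : ℕ) ∈ Set.Icc 1 T := by
    intro i
    have := Finset.mem_Ioc.mp i.2
    exact ⟨Nat.one_le_iff_ne_zero.mpr (by omega), le_trans this.2 hb⟩
  set e : {i // i ∈ Finset.Ioc a b} ↪ ↥(Set.Icc 1 T) :=
    ⟨fun i => ⟨(i : ℕ), hmem i⟩, by intro i j h; ext; simpa using congrArg Subtype.val h⟩ with he_def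
  have he : ∀ i, ((e i : ↥(Set.Icc 1 T)) : ℕ) = (i : ℕ) := fun i => rfl
  set F : Finset ↥(Set.Icc 1 T) := (Finset.Ioc a b).attach.map e with hF
  have hsum := block_sum_eq T X a b hb e he
  have hint : ∀ i ∈ F, Integrable (fun ω => Real.exp (s * X (i : ℕ) ω)) P := by
    intro i hi
    rw [hF, Finset.mem_map] at hi
    obtain ⟨j, _, rfl⟩ := hi
    exact (mgf_of_map_gaussianReal (hXm _) (hlaw _ j.2) s).1
  constructor
  · have := hind.integrable_exp_mul_sum (fun i => hXm _) hint
    refine this.congr ?_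
    filter_upwards with ω
    rw [hsum ω]
  · have hmgf := hind.mgf_sum (t := s) (fun i => hXm _) F
    have h1 : mgf (fun ω => ∑ i ∈ Finset.Ioc a b, X i ω) P s
        = mgf (∑ i ∈ F, (fun j : ↥(Set.Icc 1 T) => X (j : ℕ)) i) P s := by
      congr 1
      ext ω
      rw [hsum ω]
    rw [h1, hmgf]
    have h2 : ∀ i ∈ F, mgf (fun ω => X (i : ℕ) ω) P s = Real.exp (m * s + v * s^2 / 2) := by
      intro i hi
      rw [hF, Finset.mem_map] at hi
      obtain ⟨j, _, rfl⟩ := hi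
      exact (mgf_of_map_gaussianReal (hXm _) (hlaw _ j.2) s).2
    rw [Finset.prod_congr rfl h2, Finset.prod_const]
    rw [← Real.exp_nat_mul]
    congr 1
    have : F.card = b - a := by
      rw [hF, Finset.card_map, Finset.card_attach, Nat.card_Ioc]
    rw [this, Nat.cast_sub hab]


variable {Ω : Type} [MeasurableSpace Ω]

lemma signal_tail (P : Measure Ω) [IsProbabilityMeasure P] (T : ℕ)
    (X : ℕ → Ω → ℝ) (hXm : ∀ i, Measurable (X i))
    (hind : iIndepFun (fun i : ↥(Set.Icc 1 T) => X (i : ℕ)) P)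
    (τ t : ℕ) (hτt : τ < t) (ht : t ≤ T) (μ σ : ℝ) (hμ : 0 < μ) (hσ : 0 < σ)
    (hlaw : ∀ i ∈ Finset.Ioc τ t, Measure.map (X i) P = gaussianReal μ ((σ ^ 2).toNNReal)) :
    (P {ω | ∑ i ∈ Finset.Ioc τ t, X i ω ≤ ((t : ℝ) - τ) * μ / 2}).toReal
      ≤ Real.exp (-(μ ^ 2 / (8 * σ ^ 2))) := by
  set s : ℝ := -(μ / (2 * σ ^ 2)) with hs
  have hs0 : s ≤ 0 := by
    rw [hs]
    have : 0 < μ / (2 * σ ^ 2) := by positivity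
    linarith
  have hv : (((σ ^ 2).toNNReal : ℝ≥0) : ℝ) = σ ^ 2 := Real.coe_toNNReal _ (sq_nonneg σ)
  obtain ⟨hint, hmgf⟩ := block_mgf P T X hXm hind τ t hτt.le ht s μ ((σ ^ 2).toNNReal) hlaw
  have hcher := measure_le_le_exp_mul_mgf (X := fun ω => ∑ i ∈ Finset.Ioc τ t, X i ω)
    (((t : ℝ) - τ) * μ / 2) hs0 hint
  refine hcher.trans ?_
  rw [hmgf, ← Real.exp_add, Real.exp_le_exp, hv]
  have he1 : (1 : ℝ) ≤ (t : ℝ) - τ := by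
    have : (τ : ℝ) + 1 ≤ (t : ℝ) := by exact_mod_cast hτt
    linarith
  have hkey : -s * (((t : ℝ) - τ) * μ / 2) + ((t : ℝ) - τ) * (μ * s + σ ^ 2 * s ^ 2 / 2)
      = -(((t : ℝ) - τ) * (μ ^ 2 / (8 * σ ^ 2))) := by
    rw [hs]
    field_simp
    ring
  rw [hkey]
  have hx : 0 ≤ μ ^ 2 / (8 * σ ^ 2) := by positivity
  nlinarith

lemma noise_tail (P : Measure Ω) [IsProbabilityMeasure P] (T : ℕ)
    (X : ℕ → Ω → ℝ) (hXm : ∀ i, Measurable (X i))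
    (hind : iIndepFun (fun i : ↥(Set.Icc 1 T) => X (i : ℕ)) P)
    (k τ : ℕ) (hkτ : k < τ) (hτ : τ ≤ T) (μ : ℝ) (hμ : 0 < μ)
    (hlaw : ∀ i ∈ Finset.Ioc k τ, Measure.map (X i) P = gaussianReal 0 1) :
    (P {ω | μ * Real.sqrt ((τ : ℝ) - k) / 8 ≤ ∑ i ∈ Finset.Ioc k τ, X i ω}).toReal
      + (P {ω | ∑ i ∈ Finset.Ioc k τ, X i ω ≤ -(μ * Real.sqrt ((τ : ℝ) - k) / 8)}).toReal
      ≤ 2 * Real.exp (-(μ ^ 2 / 128)) := by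
  have hd1 : (1 : ℝ) ≤ (τ : ℝ) - k := by
    have : (k : ℝ) + 1 ≤ (τ : ℝ) := by exact_mod_cast hkτ
    linarith
  set dr : ℝ := (τ : ℝ) - k with hdr
  have hsd : 0 < Real.sqrt dr := Real.sqrt_pos.mpr (by linarith)
  have hsd2 : Real.sqrt dr ^ 2 = dr := Real.sq_sqrt (by linarith)
  set s : ℝ := μ / (8 * Real.sqrt dr) with hs
  have hs0 : 0 < s := by positivity
  obtain ⟨hintp, hmgfp⟩ := block_mgf P T X hXm hind k τ hkτ.le hτ s 0 1 hlaw
  obtain ⟨hintm, hmgfm⟩ := block_mgf P T X hXm hind k τ hkτ.le hτ (-s) 0 1 hlaw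
  have hcherp := measure_ge_le_exp_mul_mgf (X := fun ω => ∑ i ∈ Finset.Ioc k τ, X i ω)
    (μ * Real.sqrt dr / 8) hs0.le hintp
  have hcherm := measure_le_le_exp_mul_mgf (X := fun ω => ∑ i ∈ Finset.Ioc k τ, X i ω)
    (-(μ * Real.sqrt dr / 8)) (by linarith : -s ≤ 0) hintm
  rw [hmgfp, ← Real.exp_add] at hcherp
  rw [hmgfm, ← Real.exp_add] at hcherm
  have hdr0 : dr ≠ 0 := by linarith
  have hsc : s * (μ * Real.sqrt dr / 8) = μ ^ 2 / 64 := by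
    rw [hs]
    field_simp
    ring
  have hss : s ^ 2 = μ ^ 2 / (64 * dr) := by
    rw [hs, div_pow, mul_pow, hsd2]
    norm_num
  have h1 : -s * (μ * Real.sqrt dr / 8) + dr * (0 * s + (1:ℝ≥0) * s ^ 2 / 2) = -(μ ^ 2 / 128) := by
    push_cast
    rw [neg_mul, hsc, hss]
    field_simp
    ring
  have h2 : -(-s) * -(μ * Real.sqrt dr / 8) + dr * (0 * -s + (1:ℝ≥0) * (-s) ^ 2 / 2)
      = -(μ ^ 2 / 128) := by
    push_cast
    rw [neg_neg, mul_neg, hsc, neg_pow, hss]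
    field_simp
    ring
  rw [h1] at hcherp
  rw [h2] at hcherm
  simp only [measureReal_def] at hcherp hcherm
  linarith



lemma pS_sub (x : ℕ → ℝ) {k t : ℕ} (h : k ≤ t) :
    pS x t - pS x k = ∑ i ∈ Finset.Ioc k t, x i := by
  have h0 : ∀ u : ℕ, pS x u = ∑ i ∈ Finset.Ioc 0 u, x i := by
    intro u
    rw [pS]
    congr 1
  rw [h0, h0, sub_eq_iff_eq_add, add_comm]
  exact (Finset.sum_Ioc_consecutive _ (Nat.zero_le k) h).symm

set_option maxHeartbeats 1000000 in
lemma core_ineq (A N e d : ℝ) (he : 1 ≤ e) (hd : 1 ≤ d) (μ : ℝ) (hμ : 0 < μ)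
    (hA : e * μ / 2 ≤ A) (hN : |N| ≤ μ * Real.sqrt d / 8) :
    |A + N| / Real.sqrt (e + d) ≤ A / Real.sqrt e := by
  set se := Real.sqrt e with hse
  set sd := Real.sqrt d with hsd
  set sed := Real.sqrt (e + d) with hsed
  have hse2 : se ^ 2 = e := Real.sq_sqrt (by linarith)
  have hsd2 : sd ^ 2 = d := Real.sq_sqrt (by linarith)
  have hsed2 : sed ^ 2 = e + d := Real.sq_sqrt (by linarith)
  have hse1 : 1 ≤ se := by rw [hse]; rw [show (1:ℝ) = Real.sqrt 1 by simp]; exact Real.sqrt_le_sqrt he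
  have hsd1 : 1 ≤ sd := by rw [hsd]; rw [show (1:ℝ) = Real.sqrt 1 by simp]; exact Real.sqrt_le_sqrt hd
  have hsedse : se ≤ sed := Real.sqrt_le_sqrt (by linarith)
  have hsedle : sed ≤ se + sd := by
    rw [hsed]
    have h1 : e + d ≤ (se + sd) ^ 2 := by nlinarith
    calc Real.sqrt (e + d) ≤ Real.sqrt ((se + sd) ^ 2) := Real.sqrt_le_sqrt h1
    _ = se + sd := by rw [Real.sqrt_sq (by positivity)]
  have hsepos : 0 < se := by linarith
  have hsedpos : 0 < sed := by linarith
  have hApos : 0 < A := by nlinarith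
  have habs : |A + N| ≤ A + |N| := by
    calc |A + N| ≤ |A| + |N| := abs_add_le _ _
    _ = A + |N| := by rw [abs_of_pos hApos]
  have hNn : 0 ≤ |N| := abs_nonneg _
  rw [div_le_div_iff₀ hsedpos hsepos]
  have hsdd : sd ≤ d := by nlinarith
  have hsee : se ≤ e := by nlinarith
  have claim1 : |N| * se * (sed + se) ≤ A * sd ^ 2 := by
    have c1 : |N| * se * (sed + se) ≤ (μ * sd / 8) * se * (sed + se) := by
      apply mul_le_mul_of_nonneg_right (mul_le_mul_of_nonneg_right hN hsepos.le) (by positivity)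
    have c2 : (μ * sd / 8) * se * (sed + se) ≤ (μ * sd / 8) * se * ((se + sd) + se) := by
      apply mul_le_mul_of_nonneg_left (by linarith) (by positivity)
    have c3 : (μ * sd / 8) * se * ((se + sd) + se) = μ * (2 * se ^ 2 * sd + se * sd ^ 2) / 8 := by
      ring
    have c4 : μ * (2 * se ^ 2 * sd + se * sd ^ 2) / 8 ≤ μ * (3 * (e * d)) / 8 := by
      have c5 : 2 * se ^ 2 * sd + se * sd ^ 2 ≤ 3 * (e * d) := by
        rw [hse2, hsd2]
        nlinarith [mul_le_mul_of_nonneg_left hsdd (by linarith : (0:ℝ) ≤ 2 * e),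
          mul_le_mul_of_nonneg_right hsee (by linarith : (0:ℝ) ≤ d)]
      have h8 : 0 ≤ μ / 8 := by positivity
      have := mul_le_mul_of_nonneg_left c5 h8
      linarith
    have c6 : μ * (3 * (e * d)) / 8 ≤ A * sd ^ 2 := by
      rw [hsd2]
      have hmu : 0 ≤ μ * (e * d) := by positivity
      have := mul_le_mul_of_nonneg_right hA (by linarith : (0:ℝ) ≤ d)
      linarith
    linarith
  have claim2 : |N| * se ≤ A * (sed - se) := by
    have hfac : (sed - se) * (sed + se) = sd ^ 2 := by nlinarith
    have heq : (A * (sed - se)) * (sed + se) = A * sd ^ 2 := by rw [mul_assoc, hfac]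
    have h2 : |N| * se * (sed + se) ≤ (A * (sed - se)) * (sed + se) := claim1.trans_eq heq.symm
    exact le_of_mul_le_mul_right h2 (by linarith : (0:ℝ) < sed + se)
  calc |A + N| * se ≤ (A + |N|) * se := mul_le_mul_of_nonneg_right habs hsepos.le
  _ = A * se + |N| * se := by ring
  _ ≤ A * se + A * (sed - se) := by linarith
  _ = A * sed := by ring

lemma det_eq (x : ℕ → ℝ) (τ t : ℕ) (hτ1 : 1 ≤ τ) (hτt : τ < t) (μ : ℝ) (hμ : 0 < μ)
    (hA : ((t : ℝ) - τ) * μ / 2 ≤ pS x t - pS x τ)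
    (hN : ∀ k, k < τ → |pS x τ - pS x k| ≤ μ * Real.sqrt ((τ : ℝ) - k) / 8) :
    Yglr x t = ⨆ k : (Finset.Ico τ t : Finset ℕ), glrW x t (k : ℕ) := by
  have ht0 : 0 < t := lt_trans (Nat.lt_of_lt_of_le Nat.zero_lt_one hτ1) hτt
  have hne1 : Nonempty (Fin t) := ⟨⟨0, ht0⟩⟩
  have hτmem : τ ∈ Finset.Ico τ t := Finset.mem_Ico.mpr ⟨le_rfl, hτt⟩
  have hne2 : Nonempty {k // k ∈ Finset.Ico τ t} := ⟨⟨τ, hτmem⟩⟩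
  have hbdd1 : BddAbove (Set.range fun k : Fin t => glrW x t (k : ℕ)) :=
    (Set.finite_range _).bddAbove
  have hbdd2 : BddAbove (Set.range fun k : {k // k ∈ Finset.Ico τ t} => glrW x t (k : ℕ)) :=
    (Set.finite_range _).bddAbove
  have hkey : ∀ k : ℕ, k < τ → glrW x t k ≤ glrW x t τ := by
    intro k hk
    have hd1 : (1 : ℝ) ≤ (τ : ℝ) - k := by
      have : (k : ℝ) + 1 ≤ (τ : ℝ) := by exact_mod_cast hk
      linarith
    have he1 : (1 : ℝ) ≤ (t : ℝ) - τ := by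
      have : (τ : ℝ) + 1 ≤ (t : ℝ) := by exact_mod_cast hτt
      linarith
    have hdecomp : pS x t - pS x k = (pS x t - pS x τ) + (pS x τ - pS x k) := by ring
    have hApos : 0 < pS x t - pS x τ := by nlinarith
    rw [glrW, glrW, hdecomp]
    have h1 : (t : ℝ) - (k : ℝ) = ((t : ℝ) - τ) + ((τ : ℝ) - k) := by ring
    rw [h1]
    have h2 := core_ineq (pS x t - pS x τ) (pS x τ - pS x k) ((t : ℝ) - τ) ((τ : ℝ) - k)
      he1 hd1 μ hμ hA (hN k hk)
    calc |pS x t - pS x τ + (pS x τ - pS x k)| / Real.sqrt (((t : ℝ) - τ) + ((τ : ℝ) - k))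
        ≤ (pS x t - pS x τ) / Real.sqrt ((t : ℝ) - τ) := h2
    _ = |pS x t - pS x τ| / Real.sqrt ((t : ℝ) - τ) := by rw [abs_of_pos hApos]
  apply le_antisymm
  · apply ciSup_le
    intro k
    rcases lt_or_ge (k : ℕ) τ with hk | hk
    · calc glrW x t (k : ℕ) ≤ glrW x t τ := hkey _ hk
      _ ≤ _ := le_ciSup hbdd2 (⟨τ, hτmem⟩ : {k // k ∈ Finset.Ico τ t})
    · exact le_ciSup hbdd2 (⟨(k : ℕ), Finset.mem_Ico.mpr ⟨hk, k.2⟩⟩ : {k // k ∈ Finset.Ico τ t})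
  · apply ciSup_le
    intro k
    have hkt : (k : ℕ) < t := (Finset.mem_Ico.mp k.2).2
    exact le_ciSup hbdd1 (⟨(k : ℕ), hkt⟩ : Fin t)


lemma asympt (σ : ℝ) (hσ : 0 < σ) (μs : ℕ → ℝ) (Ts : ℕ → ℕ)
    (hμ : Tendsto μs atTop atTop) (hT : Tendsto Ts atTop atTop)
    (hrate : Tendsto (fun m => Real.sqrt (Real.log (Ts m : ℝ)) / μs m) atTop (nhds 0))
    (ε : ℝ) (hε : 0 < ε) :
    ∀ᶠ m in atTop, 0 < μs m ∧
      Real.exp (-(μs m ^ 2 / (8 * σ ^ 2))) + 2 * (Ts m : ℝ) * Real.exp (-(μs m ^ 2 / 128)) ≤ ε := by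
  have hμ2 : Tendsto (fun m => μs m ^ 2) atTop atTop := by
    have := hμ.atTop_mul_atTop₀ hμ
    refine this.congr (fun m => ?_)
    ring
  have h1 : Tendsto (fun m => Real.exp (-(μs m ^ 2 / (8 * σ ^ 2)))) atTop (nhds 0) := by
    apply Real.tendsto_exp_atBot.comp
    apply tendsto_neg_atTop_atBot.comp
    exact hμ2.atTop_div_const (by positivity)
  have h2 : Tendsto (fun m => 2 * Real.exp (-(7 * μs m ^ 2 / 1024))) atTop (nhds 0) := by
    rw [show (0:ℝ) = 2 * 0 by ring]
    apply Tendsto.const_mul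
    apply Real.tendsto_exp_atBot.comp
    apply tendsto_neg_atTop_atBot.comp
    apply Tendsto.atTop_div_const (by norm_num : (0:ℝ) < 1024)
    exact (tendsto_const_mul_atTop_of_pos (by norm_num : (0:ℝ) < 7)).mpr hμ2
  have he1 : ∀ᶠ m in atTop, Real.exp (-(μs m ^ 2 / (8 * σ ^ 2))) ≤ ε / 2 := by
    have := h1.eventually (eventually_le_nhds (by linarith : (0:ℝ) < ε / 2))
    filter_upwards [this] with m hm using hm
  have he2 : ∀ᶠ m in atTop, 2 * Real.exp (-(7 * μs m ^ 2 / 1024)) ≤ ε / 2 := by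
    have := h2.eventually (eventually_le_nhds (by linarith : (0:ℝ) < ε / 2))
    filter_upwards [this] with m hm using hm
  have heT : ∀ᶠ m in atTop, 1 ≤ Ts m := hT.eventually_ge_atTop 1
  have heμ : ∀ᶠ m in atTop, 1 ≤ μs m := hμ.eventually_ge_atTop 1
  have her : ∀ᶠ m in atTop, |Real.sqrt (Real.log (Ts m : ℝ)) / μs m| < 1 / 32 := by
    have := hrate.eventually (Metric.ball_mem_nhds (0:ℝ) (by norm_num : (0:ℝ) < 1/32))
    filter_upwards [this] with m hm
    rw [Real.dist_eq, sub_zero] at hm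
    exact hm
  filter_upwards [he1, he2, heT, heμ, her] with m h1' h2' hT' hμ' hr'
  have hμpos : 0 < μs m := by linarith
  refine ⟨hμpos, ?_⟩
  have hT1 : (1:ℝ) ≤ (Ts m : ℝ) := by exact_mod_cast hT'
  have hlog0 : 0 ≤ Real.log (Ts m : ℝ) := Real.log_nonneg hT1
  have hsqrt : Real.sqrt (Real.log (Ts m : ℝ)) < μs m / 32 := by
    have h := (abs_lt.mp hr').2
    rw [div_lt_iff₀ hμpos] at h
    calc Real.sqrt (Real.log (Ts m : ℝ)) < 1/32 * μs m := h
    _ = μs m / 32 := by ring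
  have hlogle : Real.log (Ts m : ℝ) ≤ μs m ^ 2 / 1024 := by
    have h := Real.sq_sqrt hlog0
    have h2 : Real.sqrt (Real.log (Ts m : ℝ)) ^ 2 ≤ (μs m / 32) ^ 2 := by
      apply pow_le_pow_left₀ (Real.sqrt_nonneg _) hsqrt.le
    rw [h] at h2
    calc Real.log (Ts m : ℝ) ≤ (μs m / 32) ^ 2 := h2
    _ = μs m ^ 2 / 1024 := by ring
  have hTexp : (Ts m : ℝ) = Real.exp (Real.log (Ts m : ℝ)) := (Real.exp_log (by linarith)).symm
  have hkey : 2 * (Ts m : ℝ) * Real.exp (-(μs m ^ 2 / 128)) ≤ 2 * Real.exp (-(7 * μs m ^ 2 / 1024)) := by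
    rw [hTexp, mul_assoc, ← Real.exp_add]
    have : Real.log (Ts m : ℝ) + -(μs m ^ 2 / 128) ≤ -(7 * μs m ^ 2 / 1024) := by linarith
    have := Real.exp_le_exp.mpr this
    linarith
  linarith

end Aux11

/-- with μ_m → ∞, 𝒯_m → ∞, √(log 𝒯_m)/μ_m → 0, P(Y_t^GLR ≠ max_{τ≤k<t} W_{t,k}) tends to 0 uniformly in 1 ≤ τ < t ≤ 𝒯_m. -/
theorem statement11 (σ : ℝ) (hσ : 0 < σ) (μs : ℕ → ℝ) (Ts : ℕ → ℕ)
    (hμ : Tendsto μs atTop atTop) (hT : Tendsto Ts atTop atTop)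
    (hrate : Tendsto (fun m => Real.sqrt (Real.log (Ts m : ℝ)) / μs m) atTop (nhds 0)) :
    ∀ ε : ℝ, 0 < ε → ∃ M : ℕ, ∀ m : ℕ, M ≤ m →
      ∀ τ t : ℕ, 1 ≤ τ → τ < t → t ≤ Ts m →
      ∀ (Ω : Type) [MeasurableSpace Ω] (P : Measure Ω) [IsProbabilityMeasure P]
        (X : ℕ → Ω → ℝ), (∀ i, Measurable (X i)) →
      iIndepFun (fun i : ↥(Set.Icc 1 (Ts m)) => X (i : ℕ)) P →
      (∀ i, 1 ≤ i → i ≤ τ → Measure.map (X i) P = gaussianReal 0 1) →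
      (∀ i, τ < i → i ≤ Ts m → Measure.map (X i) P = gaussianReal (μs m) ((σ ^ 2).toNNReal)) →
      (P {ω | Yglr (fun i => X i ω) t ≠ ⨆ k : (Finset.Ico τ t : Finset ℕ), glrW (fun i => X i ω) t (k : ℕ)}).toReal ≤ ε := by
  intro ε hε
  obtain ⟨M, hM⟩ := eventually_atTop.mp (asympt σ hσ μs Ts hμ hT hrate ε hε)
  refine ⟨M, fun m hm τ t hτ1 hτt ht Ω _ P _ X hXm hind hlaw0 hlaw1 => ?_⟩
  obtain ⟨hμpos, hbound⟩ := hM m hm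
  set μ : ℝ := μs m with hμdef
  set T : ℕ := Ts m with hTdef
  have hτT : τ ≤ T := le_of_lt (lt_of_lt_of_le hτt ht)
  -- the events
  set B : Set Ω := {ω | Yglr (fun i => X i ω) t
      ≠ ⨆ k : (Finset.Ico τ t : Finset ℕ), glrW (fun i => X i ω) t (k : ℕ)} with hB
  set E0 : Set Ω := {ω | ∑ i ∈ Finset.Ioc τ t, X i ω ≤ ((t : ℝ) - τ) * μ / 2} with hE0
  set E1 : ℕ → Set Ω := fun k =>
    {ω | μ * Real.sqrt ((τ : ℝ) - k) / 8 ≤ ∑ i ∈ Finset.Ioc k τ, X i ω} with hE1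
  set E2 : ℕ → Set Ω := fun k =>
    {ω | ∑ i ∈ Finset.Ioc k τ, X i ω ≤ -(μ * Real.sqrt ((τ : ℝ) - k) / 8)} with hE2
  -- event inclusion
  have hsub : B ⊆ E0 ∪ ⋃ k ∈ Finset.range τ, (E1 k ∪ E2 k) := by
    intro ω hω
    by_contra hc
    apply hω
    simp only [hE0, hE1, hE2, Set.mem_union, Set.mem_iUnion, Set.mem_setOf_eq, not_or,
      not_exists, not_le] at hc
    obtain ⟨h1, h2⟩ := hc
    apply det_eq (fun i => X i ω) τ t hτ1 hτt μ hμpos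
    · rw [pS_sub _ hτt.le]
      exact h1.le
    · intro k hk
      obtain ⟨ha, hb⟩ := h2 k (Finset.mem_range.mpr hk)
      rw [pS_sub _ hk.le]
      exact (abs_lt.mpr ⟨hb, ha⟩).le
  -- measure bound in ℝ≥0∞
  have hPB : P B ≤ P E0 + ∑ k ∈ Finset.range τ, P (E1 k ∪ E2 k) :=
    (measure_mono hsub).trans ((measure_union_le _ _).trans
      (add_le_add le_rfl (measure_biUnion_finset_le _ _)))
  have hfin : P E0 + ∑ k ∈ Finset.range τ, P (E1 k ∪ E2 k) ≠ ⊤ := by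
    refine ENNReal.add_ne_top.mpr ⟨measure_ne_top _ _, ?_⟩
    exact (ENNReal.sum_lt_top.mpr (fun k _ => measure_lt_top _ _)).ne
  have h0 : (P B).toReal ≤ (P E0).toReal + ∑ k ∈ Finset.range τ, (P (E1 k ∪ E2 k)).toReal := by
    have := ENNReal.toReal_mono hfin hPB
    rwa [ENNReal.toReal_add (measure_ne_top _ _)
      (ENNReal.sum_lt_top.mpr (fun k _ => measure_lt_top _ _)).ne,
      ENNReal.toReal_sum (fun k _ => measure_ne_top _ _)] at this
  -- bound on E0
  have hE0bound : (P E0).toReal ≤ Real.exp (-(μ ^ 2 / (8 * σ ^ 2))) := by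
    apply signal_tail P T X hXm hind τ t hτt ht μ σ hμpos hσ
    intro i hi
    obtain ⟨hi1, hi2⟩ := Finset.mem_Ioc.mp hi
    exact hlaw1 i hi1 (le_trans hi2 ht)
  -- bound on each E1k ∪ E2k
  have hEkbound : ∀ k ∈ Finset.range τ,
      (P (E1 k ∪ E2 k)).toReal ≤ 2 * Real.exp (-(μ ^ 2 / 128)) := by
    intro k hk
    have hkτ : k < τ := Finset.mem_range.mp hk
    have hnoise := noise_tail P T X hXm hind k τ hkτ hτT μ hμpos (fun i hi => by
      obtain ⟨hi1, hi2⟩ := Finset.mem_Ioc.mp hi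
      exact hlaw0 i (Nat.one_le_iff_ne_zero.mpr (by omega)) hi2)
    have hle : P (E1 k ∪ E2 k) ≤ P (E1 k) + P (E2 k) := measure_union_le _ _
    have := ENNReal.toReal_mono
      (ENNReal.add_ne_top.mpr ⟨measure_ne_top _ _, measure_ne_top _ _⟩) hle
    rw [ENNReal.toReal_add (measure_ne_top _ _) (measure_ne_top _ _)] at this
    exact this.trans hnoise
  have hsum : ∑ k ∈ Finset.range τ, (P (E1 k ∪ E2 k)).toReal
      ≤ (τ : ℝ) * (2 * Real.exp (-(μ ^ 2 / 128))) := by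
    calc ∑ k ∈ Finset.range τ, (P (E1 k ∪ E2 k)).toReal
        ≤ ∑ _k ∈ Finset.range τ, 2 * Real.exp (-(μ ^ 2 / 128)) := Finset.sum_le_sum hEkbound
    _ = (τ : ℝ) * (2 * Real.exp (-(μ ^ 2 / 128))) := by
        rw [Finset.sum_const, Finset.card_range, nsmul_eq_mul]
  have hτTr : (τ : ℝ) ≤ (T : ℝ) := Nat.cast_le.mpr hτT
  have hfinal : (P B).toReal ≤ Real.exp (-(μ ^ 2 / (8 * σ ^ 2)))
      + 2 * (T : ℝ) * Real.exp (-(μ ^ 2 / 128)) := by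
    have hexp0 : 0 ≤ Real.exp (-(μ ^ 2 / 128)) := (Real.exp_pos _).le
    nlinarith [h0, hE0bound, hsum]
  exact hfinal.trans hbound

end
end
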